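/- For any set X ⊆ O_n of real orthogonal n×n matrices, the Euclidean closure of the submonoid X* generated by X equals the Zariski closure of X*: Cl(X*) = Zcl(X*). Moreover this common set is a subgroup of O_n which is an algebraic set. -/

import Mathlib

open Matrix

/-- Evaluation of a real polynomial in the entry variables at a matrix. -/
noncomputable def evalMat {m : Type*} [Fintype m]
    (p : MvPolynomial (m × m) ℝ) (M : Matrix m m ℝ) : ℝ :=
  MvPolynomial.eval (fun q : m × m => M q.1 q.2) p

/-- A set of matrices is algebraic (over ℝ) if it is the common zero set of a set of real
polynomials in the entry variables. -/
def IsAlgebraicMat {m : Type*} [Fintype m] (A : Set (Matrix m m ℝ)) : Prop :=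
  ∃ P : Set (MvPolynomial (m × m) ℝ), A = {M | ∀ p ∈ P, evalMat p M = 0}

/-- The Zariski closure of a set of matrices: the common zero set of all real polynomials
vanishing on the set. -/
def zclMat {m : Type*} [Fintype m] (A : Set (Matrix m m ℝ)) : Set (Matrix m m ℝ) :=
  {X | ∀ p : MvPolynomial (m × m) ℝ, (∀ Y ∈ A, evalMat p Y = 0) → evalMat p X = 0}

/-- A subset of matrices is a subgroup of the orthogonal group if it consists of
orthogonal matrices, contains the identity, and is closed under products and inverses
(for orthogonal matrices, the inverse is the transpose). -/
def IsOrthSubgroup {m : Type*} [Fintype m] [DecidableEq m]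
    (A : Set (Matrix m m ℝ)) : Prop :=
  A ⊆ (Matrix.orthogonalGroup m ℝ : Set (Matrix m m ℝ)) ∧
    (1 : Matrix m m ℝ) ∈ A ∧
    (∀ X ∈ A, ∀ Y ∈ A, X * Y ∈ A) ∧
    (∀ X ∈ A, Xᵀ ∈ A)

section Auxiliary

open Filter Topology MeasureTheory

variable {n : ℕ}

/-- Topological group structure on the unitary group of a topological star monoid. -/
instance unitary.instTopologicalGroup' {R : Type*} [Monoid R] [StarMul R] [TopologicalSpace R]
    [ContinuousMul R] [ContinuousStar R] : IsTopologicalGroup ↥(unitary R) where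
  continuous_mul := by
    apply continuous_induced_rng.mpr
    exact ((continuous_subtype_val.comp continuous_fst).mul
      (continuous_subtype_val.comp continuous_snd))
  continuous_inv := by
    apply continuous_induced_rng.mpr
    exact continuous_star.comp continuous_subtype_val

lemma continuous_evalMat (p : MvPolynomial (Fin n × Fin n) ℝ) :
    Continuous fun M : Matrix (Fin n) (Fin n) ℝ => evalMat p M := by
  have h1 : Continuous fun M : Matrix (Fin n) (Fin n) ℝ =>
      (fun q : Fin n × Fin n => M q.1 q.2) :=
    continuous_pi fun q => (continuous_apply q.2).comp (continuous_apply q.1)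
  exact (MvPolynomial.continuous_eval p).comp h1

lemma star_eq_transpose' (M : Matrix (Fin n) (Fin n) ℝ) : star M = Mᵀ := by
  ext i j; simp [Matrix.star_apply]

lemma isClosed_unitary_set :
    IsClosed {A : Matrix (Fin n) (Fin n) ℝ | A ∈ Matrix.unitaryGroup (Fin n) ℝ} := by
  have h : {A : Matrix (Fin n) (Fin n) ℝ | A ∈ Matrix.unitaryGroup (Fin n) ℝ}
      = {A : Matrix (Fin n) (Fin n) ℝ | star A * A = 1}
        ∩ {A : Matrix (Fin n) (Fin n) ℝ | A * star A = 1} := by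
    ext A; exact Unitary.mem_iff
  rw [h]
  exact (isClosed_eq (continuous_star.mul continuous_id) continuous_const).inter
    (isClosed_eq (continuous_id.mul continuous_star) continuous_const)

lemma isCompact_of_subset_unitary {s : Set (Matrix (Fin n) (Fin n) ℝ)}
    (hs : ∀ A ∈ s, A ∈ Matrix.unitaryGroup (Fin n) ℝ) (hc : IsClosed s) :
    IsCompact s := by
  have hpi : IsCompact (Set.pi Set.univ
      (fun _ : Fin n => Set.pi Set.univ fun _ : Fin n => Set.Icc (-1 : ℝ) 1)) :=
    isCompact_univ_pi fun _ => isCompact_univ_pi fun _ => isCompact_Icc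
  refine IsCompact.of_isClosed_subset hpi hc ?_
  intro A hA i _ j _
  have h2 : A * star A = 1 := (hs A hA).2
  have hdiag : ∑ k, A i k * A i k = 1 := by
    have h3 := congrFun (congrFun h2 i) i
    rw [show (A * star A) i i = ∑ k, A i k * (star A) k i from Matrix.mul_apply] at h3
    simpa [star_eq_transpose', Matrix.transpose_apply, Matrix.one_apply] using h3
  have hle : A i j * A i j ≤ 1 := by
    rw [← hdiag]
    exact Finset.single_le_sum (f := fun k => A i k * A i k)
      (fun k _ => mul_self_nonneg _) (Finset.mem_univ j)
  exact Set.mem_Icc.mpr (abs_le.mp (abs_le_one_iff_mul_self_le_one.mpr hle))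

lemma transpose_mem_closure (S : Submonoid (Matrix (Fin n) (Fin n) ℝ))
    (hKU : closure (S : Set (Matrix (Fin n) (Fin n) ℝ)) ⊆
      {A : Matrix (Fin n) (Fin n) ℝ | A ∈ Matrix.unitaryGroup (Fin n) ℝ})
    (hKcomp : IsCompact (closure (S : Set (Matrix (Fin n) (Fin n) ℝ)))) :
    ∀ A ∈ closure (S : Set (Matrix (Fin n) (Fin n) ℝ)),
      Aᵀ ∈ closure (S : Set (Matrix (Fin n) (Fin n) ℝ)) := by
  intro A hA
  haveI : FirstCountableTopology (Matrix (Fin n) (Fin n) ℝ) :=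
    inferInstanceAs (FirstCountableTopology (Fin n → Fin n → ℝ))
  have hTcoe : (S.topologicalClosure : Set (Matrix (Fin n) (Fin n) ℝ))
      = closure (S : Set (Matrix (Fin n) (Fin n) ℝ)) := S.coe_topologicalClosure
  have hA' : A ∈ S.topologicalClosure := by rw [← SetLike.mem_coe, hTcoe]; exact hA
  have hpowK : ∀ k : ℕ, A ^ k ∈ closure (S : Set (Matrix (Fin n) (Fin n) ℝ)) := fun k => by
    rw [← hTcoe]; exact SetLike.mem_coe.mpr (pow_mem hA' k)
  obtain ⟨L, hLK, φ, hφ, hTL⟩ := hKcomp.tendsto_subseq hpowK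
  have hAU : A ∈ Matrix.unitaryGroup (Fin n) ℝ := hKU hA
  have hstar : Aᵀ * A = 1 := by rw [← star_eq_transpose']; exact hAU.1
  have hpow : ∀ k : ℕ, (A ^ k)ᵀ * A ^ k = 1 := fun k => by
    rw [← star_eq_transpose']; exact (pow_mem hAU k).1
  have hLU : L ∈ Matrix.unitaryGroup (Fin n) ℝ := hKU hLK
  have hL1 : Lᵀ * L = 1 := by rw [← star_eq_transpose']; exact hLU.1
  set B : ℕ → Matrix (Fin n) (Fin n) ℝ :=
    fun i => Aᵀ * ((A ^ φ i)ᵀ * A ^ φ (i + 1)) with hB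
  have hBmem : ∀ i, B i ∈ closure (S : Set (Matrix (Fin n) (Fin n) ℝ)) := by
    intro i
    have hlt : φ i < φ (i + 1) := hφ (Nat.lt_succ_self i)
    have hd : φ i + 1 + (φ (i + 1) - φ i - 1) = φ (i + 1) := by omega
    have e1 : A ^ φ (i + 1) = A ^ φ i * A * A ^ (φ (i + 1) - φ i - 1) := by
      rw [← pow_succ, ← pow_add, hd]
    have e2 : B i = A ^ (φ (i + 1) - φ i - 1) := by
      rw [hB]
      simp only []
      rw [e1, mul_assoc (A ^ φ i) A, ← mul_assoc ((A ^ φ i)ᵀ), hpow (φ i), one_mul,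
        ← mul_assoc, hstar, one_mul]
    rw [e2]
    exact hpowK _
  have h1 : Tendsto (fun i => (A ^ φ i)ᵀ) atTop (𝓝 Lᵀ) :=
    ((continuous_id.matrix_transpose).tendsto L).comp hTL
  have h2 : Tendsto (fun i => A ^ φ (i + 1)) atTop (𝓝 L) :=
    hTL.comp (tendsto_add_atTop_nat 1)
  have h3 : Tendsto B atTop (𝓝 (Aᵀ * (Lᵀ * L))) :=
    tendsto_const_nhds.mul (h1.mul h2)
  rw [show Aᵀ * (Lᵀ * L) = Aᵀ by rw [hL1, mul_one]] at h3
  exact isClosed_closure.mem_of_tendsto h3 (Eventually.of_forall hBmem)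

/-- Substitute `(i,j) ↦ ∑ k, Y (i,k) * C (g (k,j))`. -/
noncomputable def liftP (p : MvPolynomial (Fin n × Fin n) ℝ) :
    MvPolynomial (Fin n × Fin n) (MvPolynomial (Fin n × Fin n) ℝ) :=
  MvPolynomial.eval₂Hom (MvPolynomial.C.comp MvPolynomial.C)
    (fun ij => ∑ k, MvPolynomial.X (ij.1, k) * MvPolynomial.C (MvPolynomial.X (k, ij.2))) p

lemma eval₂Hom_liftP (p : MvPolynomial (Fin n × Fin n) ℝ) (g y : Matrix (Fin n) (Fin n) ℝ) :
    MvPolynomial.eval₂Hom (MvPolynomial.eval (fun q : Fin n × Fin n => g q.1 q.2))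
      (fun q : Fin n × Fin n => y q.1 q.2) (liftP p) = evalMat p (y * g) := by
  have key : (MvPolynomial.eval₂Hom
        (MvPolynomial.eval (fun q : Fin n × Fin n => g q.1 q.2))
        (fun q : Fin n × Fin n => y q.1 q.2)).comp
      (MvPolynomial.eval₂Hom (MvPolynomial.C.comp MvPolynomial.C)
        (fun ij : Fin n × Fin n =>
          ∑ k, MvPolynomial.X (ij.1, k) * MvPolynomial.C (MvPolynomial.X (k, ij.2))))
      = (MvPolynomial.eval (fun q : Fin n × Fin n => (y * g) q.1 q.2) :
          MvPolynomial (Fin n × Fin n) ℝ →+* ℝ) := by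
    apply MvPolynomial.ringHom_ext
    · intro r
      simp
    · intro ij
      simp [Matrix.mul_apply]
  have h2 := congrArg (fun f : MvPolynomial (Fin n × Fin n) ℝ →+* ℝ => f p) key
  simp only [RingHom.comp_apply] at h2
  exact h2

lemma mem_closure_of_mem_zcl (S : Submonoid (Matrix (Fin n) (Fin n) ℝ))
    (hSU : (S : Set (Matrix (Fin n) (Fin n) ℝ)) ⊆
      {A : Matrix (Fin n) (Fin n) ℝ | A ∈ Matrix.unitaryGroup (Fin n) ℝ})
    {x : Matrix (Fin n) (Fin n) ℝ} (hx : x ∈ zclMat (S : Set (Matrix (Fin n) (Fin n) ℝ))) :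
    x ∈ closure (S : Set (Matrix (Fin n) (Fin n) ℝ)) := by
  by_contra hxK
  set K := closure (S : Set (Matrix (Fin n) (Fin n) ℝ)) with hKdef
  have hKU : K ⊆ {A : Matrix (Fin n) (Fin n) ℝ | A ∈ Matrix.unitaryGroup (Fin n) ℝ} :=
    closure_minimal hSU isClosed_unitary_set
  have hKclosed : IsClosed K := isClosed_closure
  have hKcomp : IsCompact K := isCompact_of_subset_unitary (fun A hA => hKU hA) hKclosed
  have hTcoe : (S.topologicalClosure : Set (Matrix (Fin n) (Fin n) ℝ)) = K :=
    S.coe_topologicalClosure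
  have hKmul : ∀ A ∈ K, ∀ B ∈ K, A * B ∈ K := by
    intro A hA B hB
    rw [← hTcoe] at hA hB ⊢
    exact SetLike.mem_coe.mpr (mul_mem (SetLike.mem_coe.mp hA) (SetLike.mem_coe.mp hB))
  have hK1 : (1 : Matrix (Fin n) (Fin n) ℝ) ∈ K := by
    rw [← hTcoe]; exact SetLike.mem_coe.mpr (one_mem _)
  have hKt : ∀ A ∈ K, Aᵀ ∈ K := transpose_mem_closure S hKU hKcomp
  -- the translated compact set
  set K2 : Set (Matrix (Fin n) (Fin n) ℝ) := (fun g => x * g) '' K with hK2def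
  have hK2comp : IsCompact K2 := hKcomp.image (continuous_const.mul continuous_id)
  have hdisj : Disjoint K K2 := by
    rw [Set.disjoint_left]
    rintro A hAK ⟨g, hgK, rfl⟩
    apply hxK
    have hgU : g ∈ Matrix.unitaryGroup (Fin n) ℝ := hKU hgK
    have hxg : x = (x * g) * gᵀ := by
      rw [mul_assoc, ← star_eq_transpose', hgU.2, mul_one]
    rw [hxg]
    exact hKmul _ hAK _ (hKt _ hgK)
  set Kc : Set (Matrix (Fin n) (Fin n) ℝ) := K ∪ K2 with hKcdef
  have hKccomp : IsCompact Kc := hKcomp.union hK2comp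
  haveI hTcs : CompactSpace ↥Kc := isCompact_iff_compactSpace.mp hKccomp
  -- Urysohn separation on the compact space Kc
  have hs1 : IsClosed ((Subtype.val : ↥Kc → _) ⁻¹' K) :=
    hKclosed.preimage continuous_subtype_val
  have hs2 : IsClosed ((Subtype.val : ↥Kc → _) ⁻¹' K2) :=
    hK2comp.isClosed.preimage continuous_subtype_val
  have hdisj' : Disjoint ((Subtype.val : ↥Kc → _) ⁻¹' K)
      ((Subtype.val : ↥Kc → _) ⁻¹' K2) := hdisj.preimage _
  obtain ⟨f, hf0, hf1, -⟩ := exists_continuous_zero_one_of_isClosed hs1 hs2 hdisj'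
  -- Stone–Weierstrass approximation by a polynomial
  set Ψ : MvPolynomial (Fin n × Fin n) ℝ →ₐ[ℝ] C(↥Kc, ℝ) :=
    MvPolynomial.aeval (fun q : Fin n × Fin n =>
      (⟨fun t : ↥Kc => (t : Matrix (Fin n) (Fin n) ℝ) q.1 q.2,
        (continuous_apply q.2).comp ((continuous_apply q.1).comp continuous_subtype_val)⟩ :
          C(↥Kc, ℝ))) with hΨdef
  have hΨ : ∀ (p : MvPolynomial (Fin n × Fin n) ℝ) (t : ↥Kc),
      Ψ p t = evalMat p (t : Matrix (Fin n) (Fin n) ℝ) := by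
    intro p t
    induction p using MvPolynomial.induction_on with
    | C a => simp [hΨdef, evalMat]
    | add p q hp hq => simp [map_add, hp, hq, evalMat]
    | mul_X p s hp =>
      simp [_root_.map_mul, hp, evalMat, hΨdef]
      exact Or.inl hp
  have hsep : Ψ.range.SeparatesPoints := by
    intro t s hts
    have hne : (t : Matrix (Fin n) (Fin n) ℝ) ≠ (s : Matrix (Fin n) (Fin n) ℝ) :=
      fun h => hts (Subtype.ext h)
    have hij : ∃ i j, (t : Matrix (Fin n) (Fin n) ℝ) i j
        ≠ (s : Matrix (Fin n) (Fin n) ℝ) i j := by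
      by_contra hc
      push_neg at hc
      exact hne (by ext i j; exact hc i j)
    obtain ⟨i, j, hij⟩ := hij
    refine ⟨⇑(Ψ (MvPolynomial.X (i, j))), ⟨Ψ (MvPolynomial.X (i, j)),
      ⟨⟨MvPolynomial.X (i, j), rfl⟩, rfl⟩⟩, ?_⟩
    rw [hΨ, hΨ]
    simpa [evalMat] using hij
  obtain ⟨gp, hgp⟩ := ContinuousMap.exists_mem_subalgebra_near_continuous_of_separatesPoints
    Ψ.range hsep f f.continuous (1/4) (by norm_num)
  obtain ⟨p, hp⟩ := gp.2
  have hp' : Ψ p = ↑gp := hp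
  have hpK : ∀ A, (hA : A ∈ K) → |evalMat p A| ≤ 1/4 := by
    intro A hA
    have ht := hgp ⟨A, Or.inl hA⟩
    rw [← hp', hΨ] at ht
    have hf := hf0 (show (⟨A, Or.inl hA⟩ : ↥Kc) ∈ _ from hA)
    rw [show f ⟨A, Or.inl hA⟩ = 0 from hf] at ht
    rw [Real.norm_eq_abs] at ht
    simpa using ht.le
  have hpK2 : ∀ A, (hA : A ∈ K2) → |evalMat p A - 1| ≤ 1/4 := by
    intro A hA
    have ht := hgp ⟨A, Or.inr hA⟩
    rw [← hp', hΨ] at ht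
    have hf := hf1 (show (⟨A, Or.inr hA⟩ : ↥Kc) ∈ _ from hA)
    rw [show f ⟨A, Or.inr hA⟩ = 1 from hf, Real.norm_eq_abs] at ht
    exact ht.le
  -- the compact group H
  set U := Matrix.unitaryGroup (Fin n) ℝ with hUdef
  set H : Subgroup ↥U :=
    { carrier := {u : ↥U | (u : Matrix (Fin n) (Fin n) ℝ) ∈ K}
      one_mem' := hK1
      mul_mem' := fun {a b} ha hb => hKmul _ ha _ hb
      inv_mem' := fun {a} ha => by
        show ((a⁻¹ : ↥U) : Matrix (Fin n) (Fin n) ℝ) ∈ K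
        have hinv : ((a⁻¹ : ↥U) : Matrix (Fin n) (Fin n) ℝ)
            = star (a : Matrix (Fin n) (Fin n) ℝ) := rfl
        rw [hinv, star_eq_transpose']
        exact hKt _ ha } with hHdef
  haveI : SecondCountableTopology (Matrix (Fin n) (Fin n) ℝ) :=
    inferInstanceAs (SecondCountableTopology (Fin n → Fin n → ℝ))
  have hemb : Topology.IsEmbedding
      (fun h : ↥H => ((h : ↥U) : Matrix (Fin n) (Fin n) ℝ)) :=
    Topology.IsEmbedding.subtypeVal.comp Topology.IsEmbedding.subtypeVal
  have hrange : Set.range (fun h : ↥H => ((h : ↥U) : Matrix (Fin n) (Fin n) ℝ)) = K := by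
    ext A
    constructor
    · rintro ⟨h, rfl⟩
      exact h.2
    · intro hA
      exact ⟨⟨⟨A, hKU hA⟩, hA⟩, rfl⟩
  haveI : CompactSpace ↥H := by
    rw [← isCompact_univ_iff, hemb.isCompact_iff, Set.image_univ, hrange]
    exact hKcomp
  haveI : Nonempty ↥H := ⟨1⟩
  letI : MeasurableSpace ↥H := borel _
  haveI : BorelSpace ↥H := ⟨rfl⟩
  set μ : Measure ↥H :=
    MeasureTheory.Measure.haarMeasure (⊤ : TopologicalSpace.PositiveCompacts ↥H) with hμdef
  haveI : IsProbabilityMeasure μ := by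
    constructor
    rw [← TopologicalSpace.PositiveCompacts.coe_top (α := ↥H)]
    exact MeasureTheory.Measure.haarMeasure_self
  set em : ↥H → Matrix (Fin n) (Fin n) ℝ :=
    fun g => ((g : ↥U) : Matrix (Fin n) (Fin n) ℝ) with hemdef
  have hem : Continuous em := continuous_subtype_val.comp continuous_subtype_val
  have hemK : ∀ g : ↥H, em g ∈ K := fun g => g.2
  have hint : ∀ (c : MvPolynomial (Fin n × Fin n) ℝ) (F : ↥H → Matrix (Fin n) (Fin n) ℝ),
      Continuous F → Integrable (fun g : ↥H => evalMat c (F g)) μ := by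
    intro c F hF
    exact ((continuous_evalMat c).comp hF).integrable_of_hasCompactSupport
      (HasCompactSupport.of_compactSpace _)
  -- the averaged polynomial q
  set P := liftP p with hPdef
  set q : MvPolynomial (Fin n × Fin n) ℝ :=
    ∑ d ∈ P.support, MvPolynomial.monomial d
      (∫ g : ↥H, MvPolynomial.eval
        (fun q' : Fin n × Fin n => em g q'.1 q'.2) (MvPolynomial.coeff d P) ∂μ) with hqdef
  have hq : ∀ y : Matrix (Fin n) (Fin n) ℝ,
      evalMat q y = ∫ g : ↥H, evalMat p (y * em g) ∂μ := by
    intro y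
    have h1 : ∀ g : ↥H, evalMat p (y * em g)
        = ∑ d ∈ P.support,
            MvPolynomial.eval (fun q' : Fin n × Fin n => em g q'.1 q'.2)
              (MvPolynomial.coeff d P)
              * ∏ i ∈ d.support, (y i.1 i.2) ^ d i := by
      intro g
      rw [← eval₂Hom_liftP p (em g) y]
      rw [show (MvPolynomial.eval₂Hom
          (MvPolynomial.eval fun q' : Fin n × Fin n => em g q'.1 q'.2)
          (fun q' : Fin n × Fin n => y q'.1 q'.2)) (liftP p)
        = MvPolynomial.eval₂
          (MvPolynomial.eval fun q' : Fin n × Fin n => em g q'.1 q'.2)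
          (fun q' : Fin n × Fin n => y q'.1 q'.2) (liftP p) from rfl]
      rw [MvPolynomial.eval₂_eq]
    calc evalMat q y
        = ∑ d ∈ P.support,
            (∫ g : ↥H, MvPolynomial.eval
              (fun q' : Fin n × Fin n => em g q'.1 q'.2) (MvPolynomial.coeff d P) ∂μ)
            * ∏ i ∈ d.support, (y i.1 i.2) ^ d i := by
          rw [hqdef]
          rw [show evalMat (∑ d ∈ P.support, MvPolynomial.monomial d
              (∫ g : ↥H, MvPolynomial.eval
                (fun q' : Fin n × Fin n => em g q'.1 q'.2) (MvPolynomial.coeff d P) ∂μ)) y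
            = ∑ d ∈ P.support, evalMat (MvPolynomial.monomial d
              (∫ g : ↥H, MvPolynomial.eval
                (fun q' : Fin n × Fin n => em g q'.1 q'.2) (MvPolynomial.coeff d P) ∂μ)) y
            from by simp [evalMat]]
          refine Finset.sum_congr rfl fun d _ => ?_
          rw [show evalMat (MvPolynomial.monomial d
              (∫ g : ↥H, MvPolynomial.eval
                (fun q' : Fin n × Fin n => em g q'.1 q'.2) (MvPolynomial.coeff d P) ∂μ)) y
            = _ from MvPolynomial.eval_monomial]
          rw [Finsupp.prod]
      _ = ∑ d ∈ P.support,
            ∫ g : ↥H, MvPolynomial.eval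
              (fun q' : Fin n × Fin n => em g q'.1 q'.2) (MvPolynomial.coeff d P)
              * ∏ i ∈ d.support, (y i.1 i.2) ^ d i ∂μ := by
          refine Finset.sum_congr rfl fun d _ => ?_
          rw [MeasureTheory.integral_mul_const]
      _ = ∫ g : ↥H, ∑ d ∈ P.support,
            MvPolynomial.eval (fun q' : Fin n × Fin n => em g q'.1 q'.2)
              (MvPolynomial.coeff d P)
              * ∏ i ∈ d.support, (y i.1 i.2) ^ d i ∂μ := by
          refine (MeasureTheory.integral_finset_sum _ fun d _ => ?_).symm
          exact (hint (MvPolynomial.coeff d P) em hem).mul_const _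
      _ = ∫ g : ↥H, evalMat p (y * em g) ∂μ := by
          refine integral_congr_ae (Filter.Eventually.of_forall fun g => ?_)
          exact (h1 g).symm
  -- invariance of q on K
  have hinv : ∀ A ∈ K, evalMat q A = evalMat q 1 := by
    intro A hA
    rw [hq, hq]
    have hmemH : (⟨A, hKU hA⟩ : ↥U) ∈ H := hA
    set a : ↥H := ⟨⟨A, hKU hA⟩, hmemH⟩ with hadef
    have h2 : ∀ g : ↥H, A * em g = em (a * g) := fun g => rfl
    simp only [h2, one_mul]
    exact MeasureTheory.integral_mul_left_eq_self (fun g : ↥H => evalMat p (em g)) a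
  -- q is constant on S, hence (x being in the Zariski closure) also at x
  have hr : ∀ Y ∈ (S : Set (Matrix (Fin n) (Fin n) ℝ)),
      evalMat (q - MvPolynomial.C (evalMat q 1)) Y = 0 := by
    intro Y hY
    have h4 : evalMat q Y = evalMat q 1 := hinv Y (subset_closure hY)
    have h5 : evalMat (q - MvPolynomial.C (evalMat q 1)) Y = evalMat q Y - evalMat q 1 := by
      simp [evalMat]
    rw [h5, h4, sub_self]
  have hx0 := hx _ hr
  have hx1 : evalMat q x = evalMat q 1 := by
    have h5 : evalMat q x - evalMat q 1 = 0 := by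
      simpa [evalMat, sub_eq_zero] using hx0
    linarith
  -- bounds
  have hb1 : evalMat q 1 ≤ 1/4 := by
    rw [hq]
    have hmono : ∫ g : ↥H, evalMat p (1 * em g) ∂μ ≤ ∫ _g : ↥H, (1/4 : ℝ) ∂μ := by
      refine integral_mono (hint p (fun g => 1 * em g) (continuous_const.mul hem))
        (integrable_const _) fun g => ?_
      calc evalMat p (1 * em g) = evalMat p (em g) := by rw [one_mul]
        _ ≤ |evalMat p (em g)| := le_abs_self _
        _ ≤ 1/4 := hpK _ (hemK g)
    simpa using hmono
  have hb2 : (3/4 : ℝ) ≤ evalMat q x := by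
    rw [hq]
    have hmono : ∫ _g : ↥H, (3/4 : ℝ) ∂μ ≤ ∫ g : ↥H, evalMat p (x * em g) ∂μ := by
      refine integral_mono (integrable_const _)
        (hint p (fun g => x * em g) (continuous_const.mul hem)) fun g => ?_
      have hmem2 : x * em g ∈ K2 := ⟨em g, hemK g, rfl⟩
      have := hpK2 _ hmem2
      have habs := abs_le.mp this
      linarith [habs.1]
    simpa using hmono
  linarith
end Auxiliary

section Final

variable {n : ℕ}

lemma isClosed_zclMat (A : Set (Matrix (Fin n) (Fin n) ℝ)) : IsClosed (zclMat A) := by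
  have h : zclMat A = ⋂ p ∈ {p : MvPolynomial (Fin n × Fin n) ℝ | ∀ Y ∈ A, evalMat p Y = 0},
      {M : Matrix (Fin n) (Fin n) ℝ | evalMat p M = 0} := by
    ext M
    simp only [zclMat, Set.mem_setOf_eq, Set.mem_iInter]
  rw [h]
  exact isClosed_biInter fun p _ => isClosed_eq (continuous_evalMat p) continuous_const

end Final

/-- For a set `X` of real orthogonal `n × n` matrices, the Euclidean
closure of the submonoid `X*` generated by `X` equals its Zariski closure; moreover this
common set is a subgroup of `O_n` which is an algebraic set. -/
theorem closure_submonoid_eq_zariski {n : ℕ}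
    (X : Set (Matrix (Fin n) (Fin n) ℝ))
    (hX : X ⊆ (Matrix.orthogonalGroup (Fin n) ℝ : Set (Matrix (Fin n) (Fin n) ℝ))) :
    closure (Submonoid.closure X : Set (Matrix (Fin n) (Fin n) ℝ)) =
      zclMat (Submonoid.closure X : Set (Matrix (Fin n) (Fin n) ℝ)) ∧
    IsOrthSubgroup (closure (Submonoid.closure X : Set (Matrix (Fin n) (Fin n) ℝ))) ∧
    IsAlgebraicMat (closure (Submonoid.closure X : Set (Matrix (Fin n) (Fin n) ℝ))) := by
  set S := Submonoid.closure X with hSdef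
  have hle : S ≤ Matrix.orthogonalGroup (Fin n) ℝ := Submonoid.closure_le.mpr hX
  have hSU : (S : Set (Matrix (Fin n) (Fin n) ℝ)) ⊆
      {A : Matrix (Fin n) (Fin n) ℝ | A ∈ Matrix.unitaryGroup (Fin n) ℝ} := fun A hA =>
    hle hA
  have hKU : closure (S : Set (Matrix (Fin n) (Fin n) ℝ)) ⊆
      {A : Matrix (Fin n) (Fin n) ℝ | A ∈ Matrix.unitaryGroup (Fin n) ℝ} :=
    closure_minimal hSU isClosed_unitary_set
  have hKcomp : IsCompact (closure (S : Set (Matrix (Fin n) (Fin n) ℝ))) :=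
    isCompact_of_subset_unitary (fun A hA => hKU hA) isClosed_closure
  have hTcoe : (S.topologicalClosure : Set (Matrix (Fin n) (Fin n) ℝ))
      = closure (S : Set (Matrix (Fin n) (Fin n) ℝ)) := S.coe_topologicalClosure
  have heq : closure (S : Set (Matrix (Fin n) (Fin n) ℝ))
      = zclMat (S : Set (Matrix (Fin n) (Fin n) ℝ)) := by
    apply le_antisymm
    · apply closure_minimal ?_ (isClosed_zclMat _)
      intro Y hY p hp
      exact hp Y hY
    · intro x hx
      exact mem_closure_of_mem_zcl S hSU hx
  refine ⟨heq, ⟨hKU, ?_, ?_, transpose_mem_closure S hKU hKcomp⟩, ?_⟩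
  · rw [← hTcoe]; exact SetLike.mem_coe.mpr (one_mem _)
  · intro A hA B hB
    rw [← hTcoe] at hA hB ⊢
    exact SetLike.mem_coe.mpr (mul_mem (SetLike.mem_coe.mp hA) (SetLike.mem_coe.mp hB))
  · refine ⟨{p : MvPolynomial (Fin n × Fin n) ℝ |
      ∀ Y ∈ (S : Set (Matrix (Fin n) (Fin n) ℝ)), evalMat p Y = 0}, ?_⟩
    rw [heq]
    ext M
    simp only [zclMat, Set.mem_setOf_eq]
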